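/- Let X, X̃ be random elements of a Polish space E, φ : E → ℝ measurable, and p, q, r ∈ [1, ∞) with 1/q + 1/r = 1. With μ, μ̃ the laws of X, X̃ respectively, we have E[|φ(X̃)|^p]^{1/p} ≤ E[|φ(X)|^p]^{1/p} + ‖μ - μ̃‖_tv^{1/(pq)} ( E[|φ(X)|^{pr}]^{1/(pr)} + E[|φ(X̃)|^{pr}]^{1/(pr)} ). -/

import Mathlib

open MeasureTheory

noncomputable def tvDist {E : Type*} [MeasurableSpace E] (μ ν : Measure E) : ℝ :=
  ⨆ A : {A : Set E // MeasurableSet A}, |(μ A.1).toReal - (ν A.1).toReal|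

lemma aux_rpow_add {x y : ℝ} (hx : 0 ≤ x) (hy : 0 ≤ y) {p : ℝ} (hp : 1 ≤ p) :
    (x + y) ^ (1 / p) ≤ x ^ (1 / p) + y ^ (1 / p) := by
  have hp0 : p ≠ 0 := by positivity
  lift x to NNReal using hx
  lift y to NNReal using hy
  have h := NNReal.rpow_add_rpow_le_add (x ^ (1 / p)) (y ^ (1 / p)) hp
  rw [← NNReal.rpow_mul, ← NNReal.rpow_mul, one_div_mul_cancel hp0, NNReal.rpow_one,
    NNReal.rpow_one] at h
  exact_mod_cast h

lemma aux_eta {E : Type*} [MeasurableSpace E] (μ ν : Measure E) [IsProbabilityMeasure μ]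
    [IsProbabilityMeasure ν] :
    ∃ η : Measure E, ν ≤ μ + η ∧ η ≤ ν ∧ (η Set.univ).toReal ≤ tvDist μ ν := by
  obtain ⟨s, hs, hs1, hs2⟩ := hahn_decomposition (μ := μ) (ν := ν)
  have hsc : MeasurableSet sᶜ := hs.compl
  have hle : μ.restrict sᶜ ≤ ν.restrict sᶜ := by
    rw [Measure.le_iff]
    intro t ht
    rw [Measure.restrict_apply ht, Measure.restrict_apply ht]
    exact hs2 _ (ht.inter hsc) Set.inter_subset_right
  refine ⟨ν.restrict sᶜ - μ.restrict sᶜ, ?_, ?_, ?_⟩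
  · rw [Measure.le_iff]
    intro t ht
    have hdecomp : ∀ κ : Measure E, κ (t ∩ s) + κ (t ∩ sᶜ) = κ t := by
      intro κ
      have := measure_inter_add_diff (μ := κ) t hs
      rwa [Set.diff_eq] at this
    have h2 : μ (t ∩ sᶜ) ≤ ν (t ∩ sᶜ) := hs2 _ (ht.inter hsc) Set.inter_subset_right
    have hη : (ν.restrict sᶜ - μ.restrict sᶜ) t = ν (t ∩ sᶜ) - μ (t ∩ sᶜ) := by
      rw [Measure.sub_apply ht hle, Measure.restrict_apply ht, Measure.restrict_apply ht]
    calc ν t = ν (t ∩ s) + ν (t ∩ sᶜ) := (hdecomp ν).symm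
      _ ≤ μ (t ∩ s) + (μ (t ∩ sᶜ) + (ν (t ∩ sᶜ) - μ (t ∩ sᶜ))) := by
          refine add_le_add (hs1 _ (ht.inter hs) Set.inter_subset_right) ?_
          rw [add_tsub_cancel_of_le h2]
      _ = μ t + (ν.restrict sᶜ - μ.restrict sᶜ) t := by
          rw [← add_assoc, hdecomp μ, hη]
      _ = (μ + (ν.restrict sᶜ - μ.restrict sᶜ)) t := rfl
  · exact le_trans Measure.sub_le Measure.restrict_le_self
  · have h : (ν.restrict sᶜ - μ.restrict sᶜ) Set.univ
        = ν.restrict sᶜ Set.univ - μ.restrict sᶜ Set.univ :=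
      Measure.sub_apply MeasurableSet.univ hle
    rw [h, Measure.restrict_apply_univ, Measure.restrict_apply_univ]
    have hμν : μ sᶜ ≤ ν sᶜ := hs2 _ hsc le_rfl
    rw [ENNReal.toReal_sub_of_le hμν (measure_ne_top _ _)]
    have habs : |(μ sᶜ).toReal - (ν sᶜ).toReal| = (ν sᶜ).toReal - (μ sᶜ).toReal := by
      rw [abs_sub_comm, abs_of_nonneg]
      exact sub_nonneg.mpr (ENNReal.toReal_le_toReal (measure_ne_top _ _) (measure_ne_top _ _) |>.mpr hμν)
    rw [← habs]
    refine le_ciSup_of_le ?_ ⟨sᶜ, hsc⟩ le_rfl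
    refine ⟨2, ?_⟩
    rintro x ⟨⟨A, hA⟩, rfl⟩
    have h1 : (μ A).toReal ≤ 1 := by
      have := ENNReal.toReal_mono (b := 1) (by simp) (prob_le_one (μ := μ) (s := A))
      simpa using this
    have h2 : (ν A).toReal ≤ 1 := by
      have := ENNReal.toReal_mono (b := 1) (by simp) (prob_le_one (μ := ν) (s := A))
      simpa using this
    have h3 : (0:ℝ) ≤ (μ A).toReal := ENNReal.toReal_nonneg
    have h4 : (0:ℝ) ≤ (ν A).toReal := ENNReal.toReal_nonneg
    rw [abs_le]
    constructor <;> nlinarith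

/-- Coupling moment-transfer inequality: for random elements `X, X̃` of a Polish space,
a measurable `φ : E → ℝ`, and `p, q, r ∈ [1, ∞)` with `1/q + 1/r = 1`,
`E[|φ(X̃)|^p]^{1/p} ≤ E[|φ(X)|^p]^{1/p}
   + ‖μ - μ̃‖_tv^{1/(pq)} (E[|φ(X)|^{pr}]^{1/(pr)} + E[|φ(X̃)|^{pr}]^{1/(pr)})`. -/
theorem stmt_5 {Ω E : Type*} [MeasurableSpace Ω]
    [TopologicalSpace E] [PolishSpace E] [MeasurableSpace E] [BorelSpace E]
    (ℙ : Measure Ω) [IsProbabilityMeasure ℙ]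
    (X Xt : Ω → E) (hX : Measurable X) (hXt : Measurable Xt)
    (φ : E → ℝ) (hφ : Measurable φ)
    (p q r : ℝ) (hp : 1 ≤ p) (hq : 1 ≤ q) (hr : 1 ≤ r) (hqr : 1 / q + 1 / r = 1)
    (hIX : Integrable (fun ω => |φ (X ω)| ^ (p * r)) ℙ)
    (hIXt : Integrable (fun ω => |φ (Xt ω)| ^ (p * r)) ℙ) :
    (∫ ω, |φ (Xt ω)| ^ p ∂ℙ) ^ (1 / p) ≤
      (∫ ω, |φ (X ω)| ^ p ∂ℙ) ^ (1 / p) +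
        tvDist (Measure.map X ℙ) (Measure.map Xt ℙ) ^ (1 / (p * q)) *
          ((∫ ω, |φ (X ω)| ^ (p * r) ∂ℙ) ^ (1 / (p * r)) +
            (∫ ω, |φ (Xt ω)| ^ (p * r) ∂ℙ) ^ (1 / (p * r))) := by
  -- basic positivity facts
  have hp0 : (0:ℝ) < p := lt_of_lt_of_le one_pos hp
  have hq0 : (0:ℝ) < q := lt_of_lt_of_le one_pos hq
  have hr0 : (0:ℝ) < r := lt_of_lt_of_le one_pos hr
  have h1r : 1 / r < 1 := by
    have : 0 < 1 / q := by positivity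
    linarith
  have hr1 : 1 < r := (div_lt_one hr0).mp h1r
  have conj : Real.HolderConjugate r q := by
    refine Real.holderConjugate_iff.mpr ⟨hr1, ?_⟩
    rw [inv_eq_one_div, inv_eq_one_div, add_comm]
    exact hqr
  set μ := Measure.map X ℙ with hμdef
  set ν := Measure.map Xt ℙ with hνdef
  haveI : IsProbabilityMeasure μ := Measure.isProbabilityMeasure_map hX.aemeasurable
  haveI : IsProbabilityMeasure ν := Measure.isProbabilityMeasure_map hXt.aemeasurable
  set f : E → ℝ := fun x => |φ x| ^ p with hfdef
  set g : E → ℝ := fun x => |φ x| ^ (p * r) with hgdef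
  have hf_m : Measurable f :=
    (Real.continuous_rpow_const (by positivity)).measurable.comp hφ.abs
  have hg_m : Measurable g :=
    (Real.continuous_rpow_const (by positivity)).measurable.comp hφ.abs
  have hf_nonneg : ∀ x, 0 ≤ f x := fun x => Real.rpow_nonneg (abs_nonneg _) _
  have hg_nonneg : ∀ x, 0 ≤ g x := fun x => Real.rpow_nonneg (abs_nonneg _) _
  -- transfer integrals
  have eqfX : ∫ ω, |φ (X ω)| ^ p ∂ℙ = ∫ x, f x ∂μ :=
    (integral_map hX.aemeasurable hf_m.aestronglyMeasurable).symm
  have eqfXt : ∫ ω, |φ (Xt ω)| ^ p ∂ℙ = ∫ x, f x ∂ν :=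
    (integral_map hXt.aemeasurable hf_m.aestronglyMeasurable).symm
  have eqgX : ∫ ω, |φ (X ω)| ^ (p * r) ∂ℙ = ∫ x, g x ∂μ :=
    (integral_map hX.aemeasurable hg_m.aestronglyMeasurable).symm
  have eqgXt : ∫ ω, |φ (Xt ω)| ^ (p * r) ∂ℙ = ∫ x, g x ∂ν :=
    (integral_map hXt.aemeasurable hg_m.aestronglyMeasurable).symm
  -- integrability
  have hgμ : Integrable g μ :=
    (integrable_map_measure hg_m.aestronglyMeasurable hX.aemeasurable).mpr hIX
  have hgν : Integrable g ν :=
    (integrable_map_measure hg_m.aestronglyMeasurable hXt.aemeasurable).mpr hIXt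
  have hfbound : ∀ x, ‖f x‖ ≤ 1 + g x := by
    intro x
    rw [Real.norm_of_nonneg (hf_nonneg x)]
    rcases le_or_gt (|φ x|) 1 with hx | hx
    · have : f x ≤ 1 := Real.rpow_le_one (abs_nonneg _) hx hp0.le
      linarith [hg_nonneg x]
    · have : f x ≤ g x := Real.rpow_le_rpow_of_exponent_le hx.le
        (le_mul_of_one_le_right hp0.le hr)
      linarith
  have hfμ : Integrable f μ :=
    Integrable.mono' ((integrable_const 1).add hgμ) hf_m.aestronglyMeasurable
      (Filter.Eventually.of_forall hfbound)
  have hfν : Integrable f ν :=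
    Integrable.mono' ((integrable_const 1).add hgν) hf_m.aestronglyMeasurable
      (Filter.Eventually.of_forall hfbound)
  -- the defect measure η
  obtain ⟨η, hη1, hη2, hη3⟩ := aux_eta μ ν
  haveI : IsFiniteMeasure η := isFiniteMeasure_of_le ν hη2
  have hfη : Integrable f η := hfν.mono_measure hη2
  have hgη : Integrable g η := hgν.mono_measure hη2
  -- step 1 : ∫ f dν ≤ ∫ f dμ + ∫ f dη
  have step1 : ∫ x, f x ∂ν ≤ ∫ x, f x ∂μ + ∫ x, f x ∂η := by
    have h := integral_mono_measure hη1
      (Filter.Eventually.of_forall hf_nonneg) (hfμ.add_measure hfη)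
    rwa [integral_add_measure hfμ hfη] at h
  -- step 2 : Hölder on η
  have hr0' : ENNReal.ofReal r ≠ 0 := by
    simp only [ne_eq, ENNReal.ofReal_eq_zero, not_le]; exact hr0
  have hmemf : MemLp f (ENNReal.ofReal r) η := by
    refine (memLp_norm_rpow_iff hf_m.aestronglyMeasurable hr0' ENNReal.ofReal_ne_top).mp ?_
    rw [ENNReal.div_self hr0' ENNReal.ofReal_ne_top, memLp_one_iff_integrable]
    refine hgη.congr (Filter.Eventually.of_forall fun x => ?_)
    show g x = ‖f x‖ ^ (ENNReal.ofReal r).toReal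
    rw [Real.norm_of_nonneg (hf_nonneg x), ENNReal.toReal_ofReal hr0.le,
      ← Real.rpow_mul (abs_nonneg _)]
  have hmem1 : MemLp (fun _ : E => (1:ℝ)) (ENNReal.ofReal q) η := memLp_const 1
  have step2 : ∫ x, f x ∂η ≤
      (∫ x, g x ∂η) ^ (1 / r) * (η Set.univ).toReal ^ (1 / q) := by
    have h := integral_mul_le_Lp_mul_Lq_of_nonneg conj
      (Filter.Eventually.of_forall hf_nonneg)
      (Filter.Eventually.of_forall fun _ => zero_le_one) hmemf hmem1
    simp only [mul_one, Real.one_rpow] at h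
    rw [integral_const, smul_eq_mul, mul_one] at h
    have heq : ∫ x, f x ^ r ∂η = ∫ x, g x ∂η := by
      refine integral_congr_ae (Filter.Eventually.of_forall fun x => ?_)
      rw [hfdef, hgdef]
      simp only
      rw [← Real.rpow_mul (abs_nonneg _)]
    rwa [heq] at h
  -- step 3 : ∫ g dη ≤ ∫ g dν
  have step3 : ∫ x, g x ∂η ≤ ∫ x, g x ∂ν :=
    integral_mono_measure hη2 (Filter.Eventually.of_forall hg_nonneg) hgν
  -- nonnegativity of various quantities
  have hBnn : 0 ≤ ∫ x, f x ∂μ := integral_nonneg hf_nonneg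
  have hAnn : 0 ≤ ∫ x, f x ∂ν := integral_nonneg hf_nonneg
  have hCnn : 0 ≤ ∫ x, f x ∂η := integral_nonneg hf_nonneg
  have hMηnn : 0 ≤ ∫ x, g x ∂η := integral_nonneg hg_nonneg
  have hMνnn : 0 ≤ ∫ x, g x ∂ν := integral_nonneg hg_nonneg
  have hMμnn : 0 ≤ ∫ x, g x ∂μ := integral_nonneg hg_nonneg
  have htnn : (0:ℝ) ≤ (η Set.univ).toReal := ENNReal.toReal_nonneg
  have hTnn : (0:ℝ) ≤ tvDist μ ν := le_trans htnn hη3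
  -- put everything together
  rw [eqfX, eqfXt, eqgX, eqgXt]
  calc (∫ x, f x ∂ν) ^ (1/p)
      ≤ (∫ x, f x ∂μ + ∫ x, f x ∂η) ^ (1/p) :=
        Real.rpow_le_rpow hAnn step1 (by positivity)
    _ ≤ (∫ x, f x ∂μ) ^ (1/p) + (∫ x, f x ∂η) ^ (1/p) := aux_rpow_add hBnn hCnn hp
    _ ≤ (∫ x, f x ∂μ) ^ (1/p) +
          ((∫ x, g x ∂η) ^ (1/r) * (η Set.univ).toReal ^ (1/q)) ^ (1/p) := by
        exact add_le_add_right (Real.rpow_le_rpow hCnn step2 (by positivity)) _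
    _ = (∫ x, f x ∂μ) ^ (1/p) +
          (∫ x, g x ∂η) ^ (1/(p*r)) * (η Set.univ).toReal ^ (1/(p*q)) := by
        rw [Real.mul_rpow (by positivity) (by positivity),
          ← Real.rpow_mul hMηnn, ← Real.rpow_mul htnn]
        congr 2 <;> field_simp <;> ring_nf
    _ ≤ (∫ x, f x ∂μ) ^ (1/p) +
          (∫ x, g x ∂ν) ^ (1/(p*r)) * tvDist μ ν ^ (1/(p*q)) := by
        refine add_le_add_right (mul_le_mul ?_ ?_ (by positivity) (by positivity)) _
        · exact Real.rpow_le_rpow hMηnn step3 (by positivity)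
        · exact Real.rpow_le_rpow htnn hη3 (by positivity)
    _ ≤ (∫ x, f x ∂μ) ^ (1/p) +
          tvDist μ ν ^ (1/(p*q)) *
            ((∫ x, g x ∂μ) ^ (1/(p*r)) + (∫ x, g x ∂ν) ^ (1/(p*r))) := by
        rw [mul_comm]
        refine add_le_add_right (mul_le_mul_of_nonneg_left ?_ (by positivity)) _
        have : (0:ℝ) ≤ (∫ x, g x ∂μ) ^ (1/(p*r)) := by positivity
        linarith
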